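/- arXiv:1806.02484 — 2 statements merged into one kernel-verified Lean document; each statement's English description precedes it below -/
import Mathlib

section
/- Let γ : [0,1] → ℝ² be a continuously differentiable map with γ(0) = γ(1), injective on [0,1), and with γ'(t) ≠ 0 for all t ∈ [0,1]. Then there exist points 0 ≤ a ≤ b ≤ c ≤ 1 such that γ(0) + γ(b) = γ(a) + γ(c) (so the four points γ(0), γ(a), γ(b), γ(c), in this cyclic order, are the vertices of a parallelogram with one vertex at the prescribed point γ(0)), the four points γ(0), γ(a), γ(b), γ(c) are pairwise distinct, and moreover ∫_0^a ‖γ'(t)‖ dt + ∫_b^c ‖γ'(t)‖ dt = ∫_a^b ‖γ'(t)‖ dt + ∫_c^1 ‖γ'(t)‖ dt. -/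
open Set

/-- A continuous function taking values in `c + 2πℤ` on an interval has equal endpoint values. -/
lemma discrete_const {f : ℝ → ℝ} {a b c : ℝ} (hab : a ≤ b)
    (hf : ContinuousOn f (Set.Icc a b))
    (hval : ∀ s ∈ Set.Icc a b, ∃ n : ℤ, f s = c + 2 * Real.pi * n) :
    f a = f b := by
  by_contra hne
  obtain ⟨na, hna⟩ := hval a (left_mem_Icc.2 hab)
  obtain ⟨nb, hnb⟩ := hval b (right_mem_Icc.2 hab)
  have hπ := Real.pi_pos
  rcases lt_or_gt_of_ne hne with h | h
  · have hy : c + 2 * Real.pi * na + Real.pi ∈ Set.Icc (f a) (f b) := by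
      constructor
      · rw [hna]; linarith
      · rw [hnb] at h ⊢
        rw [hna] at h
        have : (na : ℝ) < nb := by nlinarith
        have : na + 1 ≤ nb := by exact_mod_cast Int.add_one_le_iff.2 (by exact_mod_cast this)
        have : (na : ℝ) + 1 ≤ nb := by exact_mod_cast this
        nlinarith
    obtain ⟨x, hx, hfx⟩ := intermediate_value_Icc hab hf hy
    obtain ⟨m, hm⟩ := hval x hx
    rw [hm] at hfx
    have : (2 : ℝ) * (m - na) = 1 := by nlinarith
    have : ((2 * (m - na) : ℤ) : ℝ) = ((1 : ℤ) : ℝ) := by push_cast; linarith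
    have := Int.cast_injective this
    omega
  · have hy : c + 2 * Real.pi * nb + Real.pi ∈ Set.Icc (f b) (f a) := by
      constructor
      · rw [hnb]; linarith
      · rw [hna] at h ⊢
        rw [hnb] at h
        have : (nb : ℝ) < na := by nlinarith
        have : nb + 1 ≤ na := by exact_mod_cast Int.add_one_le_iff.2 (by exact_mod_cast this)
        have : (nb : ℝ) + 1 ≤ na := by exact_mod_cast this
        nlinarith
    obtain ⟨x, hx, hfx⟩ := intermediate_value_Icc' hab hf hy
    obtain ⟨m, hm⟩ := hval x hx
    rw [hm] at hfx
    have : (2 : ℝ) * (m - nb) = 1 := by nlinarith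
    have : ((2 * (m - nb) : ℤ) : ℝ) = ((1 : ℤ) : ℝ) := by push_cast; linarith
    have := Int.cast_injective this
    omega

/-- Global continuous logarithm for a nonvanishing continuous map on a compact set
that is star-shaped with respect to `0`. -/
lemma exists_log_lift {K : Set (ℝ × ℝ)} (hK : IsCompact K) {x₀ : ℝ × ℝ} (hx₀ : x₀ ∈ K)
    (hstar : ∀ c ∈ Set.Icc (0:ℝ) 1, ∀ x ∈ K, c • x ∈ K)
    {F : ℝ × ℝ → ℂ} (hF : ContinuousOn F K) (h0 : ∀ x ∈ K, F x ≠ 0) :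
    ∃ h : ℝ × ℝ → ℂ, ContinuousOn h K ∧ ∀ x ∈ K, Complex.exp (h x) = F x := by
  have h0K : (0 : ℝ × ℝ) ∈ K := by
    simpa using hstar 0 (left_mem_Icc.2 zero_le_one) x₀ hx₀
  -- minimum modulus
  obtain ⟨z₀, hz₀K, hz₀min⟩ := hK.exists_isMinOn ⟨x₀, hx₀⟩ (hF.norm)
  set m : ℝ := ‖F z₀‖ with hm
  have hmpos : 0 < m := norm_pos_iff.2 (h0 z₀ hz₀K)
  -- uniform continuity of (c, x) ↦ F (c • x) on [0,1] × K
  have hΦcont : ContinuousOn (fun p : ℝ × (ℝ × ℝ) => F (p.1 • p.2)) (Set.Icc 0 1 ×ˢ K) := by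
    apply hF.comp (continuous_smul.continuousOn)
    rintro ⟨c, x⟩ ⟨hc, hx⟩
    exact hstar c hc x hx
  have hcomp : IsCompact ((Set.Icc (0:ℝ) 1) ×ˢ K) := (isCompact_Icc).prod hK
  have huc := hcomp.uniformContinuousOn_of_continuous hΦcont
  rw [Metric.uniformContinuousOn_iff] at huc
  obtain ⟨δ, hδpos, hδ⟩ := huc m hmpos
  obtain ⟨N, hN⟩ := exists_nat_gt (1 / δ)
  have hNpos : 0 < (N : ℝ) := lt_trans (by positivity) hN
  have hN0 : (N : ℝ) ≠ 0 := ne_of_gt hNpos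
  have hstep : (1 : ℝ) / N < δ := by
    rw [div_lt_iff₀ hNpos]
    calc (1:ℝ) = δ * (1/δ) := by field_simp
    _ < δ * N := by exact (mul_lt_mul_iff_right₀ hδpos).2 hN
  -- membership of i/N in [0,1]
  have hmem : ∀ i : ℕ, i ≤ N → ((i : ℝ) / N) ∈ Set.Icc (0:ℝ) 1 := by
    intro i hi
    constructor
    · positivity
    · rw [div_le_one hNpos]; exact_mod_cast hi
  -- the ratio function
  set g : ℕ → (ℝ × ℝ) → ℂ := fun i x => F ((((i:ℝ)+1) / N) • x) / F (((i:ℝ) / N) • x) with hg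
  have hmemK : ∀ (c : ℝ), c ∈ Set.Icc (0:ℝ) 1 → ∀ x ∈ K, c • x ∈ K := hstar
  have hFnormge : ∀ x ∈ K, m ≤ ‖F x‖ := fun x hx => hz₀min hx
  have hclose : ∀ i : ℕ, i < N → ∀ x ∈ K,
      ‖F ((((i:ℝ)+1) / N) • x) - F (((i:ℝ) / N) • x)‖ < m := by
    intro i hi x hx
    have h1 : (((i:ℝ)+1) / N) ∈ Set.Icc (0:ℝ) 1 := by
      have := hmem (i+1) hi; push_cast at this ⊢; exact this
    have h2 : (((i:ℝ)) / N) ∈ Set.Icc (0:ℝ) 1 := hmem i (le_of_lt hi)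
    have := hδ (((i:ℝ)+1) / N, x) (Set.mk_mem_prod h1 hx) (((i:ℝ)) / N, x)
      (Set.mk_mem_prod h2 hx) ?_
    · simpa [dist_eq_norm] using this
    · rw [Prod.dist_eq]
      have h1 : dist (((i:ℝ)+1) / N) (((i:ℝ)) / N) = 1 / N := by
        rw [Real.dist_eq, div_sub_div_same]
        rw [show ((i:ℝ)+1) - i = 1 by ring]
        rw [abs_of_nonneg (by positivity)]
      have h2 : dist x x = 0 := dist_self x
      rw [h1, h2, max_eq_left (by positivity)]
      exact hstep
  -- each ratio is within distance 1 of 1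
  have hgne : ∀ i : ℕ, i < N → ∀ x ∈ K, g i x ≠ 0 := by
    intro i hi x hx
    have h1 : (((i:ℝ)+1) / N) ∈ Set.Icc (0:ℝ) 1 := by
      have := hmem (i+1) hi; push_cast at this ⊢; exact this
    exact div_ne_zero (h0 _ (hstar _ h1 x hx)) (h0 _ (hstar _ (hmem i hi.le) x hx))
  have hball : ∀ i : ℕ, i < N → ∀ x ∈ K, ‖g i x - 1‖ < 1 := by
    intro i hi x hx
    have hxiK : (((i:ℝ)) / N) • x ∈ K := hstar _ (hmem i hi.le) x hx
    have hBne : F ((((i:ℝ)) / N) • x) ≠ 0 := h0 _ hxiK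
    have heq : g i x - 1
        = (F ((((i:ℝ)+1) / N) • x) - F ((((i:ℝ)) / N) • x)) / F ((((i:ℝ)) / N) • x) := by
      rw [hg]; field_simp
    rw [heq, norm_div, div_lt_one (norm_pos_iff.2 hBne)]
    exact lt_of_lt_of_le (hclose i hi x hx) (hFnormge _ hxiK)
  have hslit : ∀ i : ℕ, i < N → ∀ x ∈ K, g i x ∈ Complex.slitPlane := by
    intro i hi x hx
    rw [Complex.mem_slitPlane_iff]
    left
    have h1 := hball i hi x hx
    have h2 : |(g i x - 1).re| ≤ ‖g i x - 1‖ := Complex.abs_re_le_norm _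
    have h3 : (g i x - 1).re = (g i x).re - 1 := by simp
    rw [h3] at h2
    have := abs_le.1 h2
    linarith [this.1]
  -- the lift
  refine ⟨fun x => Complex.log (F 0) + ∑ i ∈ Finset.range N, Complex.log (g i x), ?_, ?_⟩
  · apply ContinuousOn.add continuousOn_const
    apply continuousOn_finset_sum
    intro i hi
    rw [Finset.mem_range] at hi
    have hcont : ContinuousOn (g i) K := by
      have c1 : ContinuousOn (fun x : ℝ × ℝ => F ((((i:ℝ)+1) / N) • x)) K := by
        apply hF.comp (continuous_const_smul _).continuousOn
        intro x hx
        have h1 : (((i:ℝ)+1) / N) ∈ Set.Icc (0:ℝ) 1 := by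
          have := hmem (i+1) hi; push_cast at this ⊢; exact this
        exact hstar _ h1 x hx
      have c2 : ContinuousOn (fun x : ℝ × ℝ => F ((((i:ℝ)) / N) • x)) K := by
        apply hF.comp (continuous_const_smul _).continuousOn
        intro x hx
        exact hstar _ (hmem i hi.le) x hx
      exact c1.div c2 (fun x hx => h0 _ (hstar _ (hmem i hi.le) x hx))
    exact hcont.clog (fun x hx => hslit i hi x hx)
  · intro x hx
    have hF0 : F 0 ≠ 0 := h0 _ h0K
    rw [Complex.exp_add, Complex.exp_sum, Complex.exp_log hF0]
    have hprod : ∀ i ∈ Finset.range N, Complex.exp (Complex.log (g i x)) = g i x := by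
      intro i hi
      rw [Finset.mem_range] at hi
      exact Complex.exp_log (hgne i hi x hx)
    rw [Finset.prod_congr rfl hprod]
    have key : ∀ n : ℕ, n ≤ N → F 0 * ∏ i ∈ Finset.range n, g i x = F (((n:ℝ) / N) • x) := by
      intro n
      induction n with
      | zero => intro _; simp
      | succ k ih =>
        intro hk
        have hkN : k < N := hk
        rw [Finset.prod_range_succ, ← mul_assoc, ih hkN.le, hg]
        have hne : F ((((k:ℝ)) / N) • x) ≠ 0 := h0 _ (hstar _ (hmem k hkN.le) x hx)
        rw [mul_comm, div_mul_cancel₀ _ hne]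
        push_cast
        ring_nf
    have := key N le_rfl
    rw [div_self hN0, one_smul] at this
    exact this

lemma exp_eq_neg_one_im {z : ℂ} (hz : Complex.exp z = -1) :
    ∃ n : ℤ, z.im = Real.pi + 2 * Real.pi * n := by
  have h1 : Complex.exp (z - Real.pi * Complex.I) = 1 := by
    rw [Complex.exp_sub, Complex.exp_pi_mul_I, hz]; norm_num
  obtain ⟨n, hn⟩ := Complex.exp_eq_one_iff.mp h1
  refine ⟨n, ?_⟩
  have h2 := congrArg Complex.im hn
  simp [Complex.sub_im, Complex.mul_im] at h2
  linarith

lemma square_zero (Γ : ℝ → ℂ) (L : ℝ) (hL : 0 < L) (hΓ : ContinuousOn Γ (Set.Icc 0 L))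
    (hloop : Γ L = Γ 0) (hinj : Set.InjOn Γ (Set.Ico 0 L)) :
    ∃ u v, u ∈ Set.Ioo 0 (L/2) ∧ v ∈ Set.Ioo 0 (L/2) ∧
      Γ u + Γ (L - v) = Γ 0 + Γ (u + L/2 - v) := by
  have hπ := Real.pi_pos
  have hne2 : ∀ t ∈ Set.Icc 0 (L/2), Γ (t + L/2) ≠ Γ t := by
    rintro t ⟨ht0, ht1⟩
    rcases ht1.eq_or_lt with h | h
    · subst h
      rw [show L/2 + L/2 = L by ring, hloop]
      exact fun hc => (by linarith : (0:ℝ) ≠ L/2)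
        (hinj ⟨le_refl 0, by linarith⟩ ⟨by linarith, by linarith⟩ hc)
    · exact fun hc => (by linarith : t + L/2 ≠ t)
        (hinj ⟨by linarith, by linarith⟩ ⟨ht0, by linarith⟩ hc)
  by_contra hcon
  push_neg at hcon
  set F : ℝ × ℝ → ℂ :=
    fun z => Γ z.1 + Γ (L - z.2) - Γ 0 - Γ (z.1 + L/2 - z.2) with hFdef
  set K : Set (ℝ × ℝ) := Set.Icc (0:ℝ) (L/2) ×ˢ Set.Icc (0:ℝ) (L/2) with hKdef
  have hL2 : (0:ℝ) ≤ L/2 := by linarith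
  have hKcomp : IsCompact K := isCompact_Icc.prod isCompact_Icc
  have h00K : ((0:ℝ), (0:ℝ)) ∈ K :=
    Set.mk_mem_prod ⟨le_refl 0, hL2⟩ ⟨le_refl 0, hL2⟩
  have hstar : ∀ c ∈ Set.Icc (0:ℝ) 1, ∀ x ∈ K, c • x ∈ K := by
    rintro c ⟨hc0, hc1⟩ ⟨u, v⟩ ⟨⟨hu0, hu1⟩, ⟨hv0, hv1⟩⟩
    rw [Prod.smul_mk, smul_eq_mul, smul_eq_mul]
    exact Set.mk_mem_prod
      ⟨mul_nonneg hc0 hu0, le_trans (mul_le_of_le_one_left hu0 hc1) hu1⟩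
      ⟨mul_nonneg hc0 hv0, le_trans (mul_le_of_le_one_left hv0 hc1) hv1⟩
  have hmaps1 : ∀ z ∈ K, z.1 ∈ Set.Icc 0 L := by
    rintro ⟨u, v⟩ ⟨⟨hu0, hu1⟩, -⟩; exact ⟨hu0, by linarith⟩
  have hmaps2 : ∀ z ∈ K, L - z.2 ∈ Set.Icc 0 L := by
    rintro ⟨u, v⟩ ⟨-, hv0, hv1⟩; exact ⟨by linarith, by linarith⟩
  have hmaps3 : ∀ z ∈ K, z.1 + L/2 - z.2 ∈ Set.Icc 0 L := by
    rintro ⟨u, v⟩ ⟨⟨hu0, hu1⟩, hv0, hv1⟩; exact ⟨by linarith, by linarith⟩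
  have hFcont : ContinuousOn F K := by
    apply ContinuousOn.sub
    apply ContinuousOn.sub
    apply ContinuousOn.add
    · exact hΓ.comp continuous_fst.continuousOn hmaps1
    · exact hΓ.comp (by fun_prop : Continuous (fun z : ℝ × ℝ => L - z.2)).continuousOn hmaps2
    · exact continuousOn_const
    · exact hΓ.comp
        (by fun_prop : Continuous (fun z : ℝ × ℝ => z.1 + L/2 - z.2)).continuousOn hmaps3
  -- nonvanishing of F on K
  have hF0 : ∀ z ∈ K, F z ≠ 0 := by
    rintro ⟨u, v⟩ ⟨⟨hu0, hu1⟩, hv0, hv1⟩ hc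
    simp only [hFdef] at hc
    simp only [Prod.fst, Prod.snd] at hu0 hu1 hv0 hv1 hc
    rcases hu0.eq_or_lt with h | hu0'
    · -- u = 0
      have h' : u = 0 := h.symm
      subst h'
      rw [show (0:ℝ) + L/2 - v = L/2 - v from by ring] at hc
      apply hne2 (L/2 - v) ⟨by linarith, by linarith⟩
      rw [show L/2 - v + L/2 = L - v from by ring]
      linear_combination hc
    · rcases hv0.eq_or_lt with h | hv0'
      · -- v = 0
        have h' : v = 0 := h.symm
        subst h'
        rw [show L - (0:ℝ) = L from by ring, show u + L/2 - (0:ℝ) = u + L/2 from by ring,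
          hloop] at hc
        apply hne2 u ⟨hu0, hu1⟩
        linear_combination -hc
      · rcases hu1.eq_or_lt with h | hu1'
        · -- u = L/2
          subst h
          rw [show L/2 + L/2 - v = L - v from by ring] at hc
          apply hne2 0 ⟨le_refl 0, hL2⟩
          rw [zero_add]
          linear_combination hc
        · rcases hv1.eq_or_lt with h | hv1'
          · -- v = L/2
            subst h
            rw [show L - L/2 = L/2 from by ring, show u + L/2 - L/2 = u from by ring] at hc
            apply hne2 0 ⟨le_refl 0, hL2⟩
            rw [zero_add]
            linear_combination hc
          · exact hcon u v ⟨hu0', hu1'⟩ ⟨hv0', hv1'⟩ (by linear_combination hc)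
  obtain ⟨h, hhcont, hhexp⟩ := exists_log_lift hKcomp h00K hstar hFcont hF0
  have hW : Γ (L/2) - Γ 0 ≠ 0 := by
    have := hne2 0 ⟨le_refl 0, hL2⟩
    rw [zero_add] at this
    exact sub_ne_zero.2 this
  -- membership of edges
  have memB : ∀ t ∈ Set.Icc (0:ℝ) (L/2), ((t, (0:ℝ)) : ℝ × ℝ) ∈ K :=
    fun t ht => Set.mk_mem_prod ht ⟨le_refl 0, hL2⟩
  have memL : ∀ t ∈ Set.Icc (0:ℝ) (L/2), (((0:ℝ), t) : ℝ × ℝ) ∈ K :=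
    fun t ht => Set.mk_mem_prod ⟨le_refl 0, hL2⟩ ht
  have memR : ∀ t ∈ Set.Icc (0:ℝ) (L/2), ((L/2, t) : ℝ × ℝ) ∈ K :=
    fun t ht => Set.mk_mem_prod ⟨hL2, le_refl _⟩ ht
  have memT : ∀ t ∈ Set.Icc (0:ℝ) (L/2), ((t, L/2) : ℝ × ℝ) ∈ K :=
    fun t ht => Set.mk_mem_prod ht ⟨hL2, le_refl _⟩
  -- edge values of F
  have ER : ∀ t ∈ Set.Icc (0:ℝ) (L/2), F (L/2, t) = Γ (L/2) - Γ 0 := by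
    intro t ht
    simp only [hFdef]
    rw [show L/2 + L/2 - t = L - t from by ring]
    ring
  have ET : ∀ t ∈ Set.Icc (0:ℝ) (L/2), F (t, L/2) = Γ (L/2) - Γ 0 := by
    intro t ht
    simp only [hFdef]
    rw [show L - L/2 = L/2 from by ring, show t + L/2 - L/2 = t from by ring]
    ring
  have EB : ∀ t ∈ Set.Icc (0:ℝ) (L/2), F (t, 0) = Γ t - Γ (t + L/2) := by
    intro t ht
    simp only [hFdef]
    rw [show L - (0:ℝ) = L from by ring, show t + L/2 - (0:ℝ) = t + L/2 from by ring, hloop]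
    ring
  have EL : ∀ t ∈ Set.Icc (0:ℝ) (L/2), F (0, L/2 - t) = Γ (t + L/2) - Γ t := by
    intro t ht
    simp only [hFdef]
    rw [show L - (L/2 - t) = t + L/2 from by ring, show (0:ℝ) + L/2 - (L/2 - t) = t from by ring]
    ring
  -- constancy of Im h along right and top edges
  have keyconst : ∀ φ : ℝ → ℝ × ℝ, Continuous φ →
      (∀ t ∈ Set.Icc (0:ℝ) (L/2), φ t ∈ K) →
      (∀ t ∈ Set.Icc (0:ℝ) (L/2), F (φ t) = Γ (L/2) - Γ 0) →
      (h (φ 0)).im = (h (φ (L/2))).im := by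
    intro φ hφ hm hFv
    have h0mem : (0:ℝ) ∈ Set.Icc (0:ℝ) (L/2) := ⟨le_refl 0, hL2⟩
    refine discrete_const (f := fun t => (h (φ t)).im) (c := (h (φ 0)).im) hL2 ?_ ?_
    · exact Complex.continuous_im.comp_continuousOn (hhcont.comp hφ.continuousOn hm)
    · intro t ht
      have h1 : Complex.exp (h (φ t) - h (φ 0)) = 1 := by
        rw [Complex.exp_sub, hhexp _ (hm t ht), hhexp _ (hm 0 h0mem), hFv t ht, hFv 0 h0mem,
          div_self hW]
      obtain ⟨n, hn⟩ := Complex.exp_eq_one_iff.mp h1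
      refine ⟨n, ?_⟩
      have h2 := congrArg Complex.im hn
      simp [Complex.sub_im, Complex.mul_im] at h2
      linarith
  have hRight : (h (L/2, (0:ℝ))).im = (h (L/2, L/2)).im :=
    keyconst (fun t => (L/2, t)) (by fun_prop) memR ER
  have hTop : (h ((0:ℝ), L/2)).im = (h (L/2, L/2)).im := by
    have := keyconst (fun t => (t, L/2)) (by fun_prop) memT ET
    exact this
  -- the diagonal comparison function
  have hρval : ∀ t ∈ Set.Icc (0:ℝ) (L/2),
      ∃ n : ℤ, (h (0, L/2 - t)).im - (h (t, 0)).im = Real.pi + 2 * Real.pi * n := by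
    intro t ht
    have hmL : ((0:ℝ), L/2 - t) ∈ K := memL (L/2 - t) ⟨by linarith [ht.2], by linarith [ht.1]⟩
    have hmB : ((t, (0:ℝ)) : ℝ × ℝ) ∈ K := memB t ht
    have hexp : Complex.exp (h (0, L/2 - t) - h (t, 0)) = -1 := by
      rw [Complex.exp_sub, hhexp _ hmL, hhexp _ hmB, EL t ht, EB t ht]
      rw [div_eq_iff (sub_ne_zero.2 (fun hcc => hne2 t ht hcc.symm))]
      ring
    obtain ⟨n, hn⟩ := exp_eq_neg_one_im hexp
    exact ⟨n, by simpa [Complex.sub_im] using hn⟩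
  have hcontρ : ContinuousOn (fun t => (h (0, L/2 - t)).im - (h (t, 0)).im)
      (Set.Icc (0:ℝ) (L/2)) := by
    apply ContinuousOn.sub
    · apply Complex.continuous_im.comp_continuousOn
      apply hhcont.comp (by fun_prop : Continuous (fun t : ℝ => ((0:ℝ), L/2 - t))).continuousOn
      intro t ht
      exact memL (L/2 - t) ⟨by linarith [ht.2], by linarith [ht.1]⟩
    · apply Complex.continuous_im.comp_continuousOn
      apply hhcont.comp (by fun_prop : Continuous (fun t : ℝ => (t, (0:ℝ)))).continuousOn
      intro t ht
      exact memB t ht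
  have hρeq := discrete_const
      (f := fun t => (h (0, L/2 - t)).im - (h (t, 0)).im) (c := Real.pi) hL2 hcontρ hρval
  obtain ⟨n, hn0⟩ := hρval 0 ⟨le_refl 0, hL2⟩
  simp only [sub_zero] at hn0
  simp only [sub_zero, sub_self] at hρeq
  have hfin : Real.pi + 2 * Real.pi * n = 0 := by linarith
  have h1 : Real.pi * (1 + 2 * (n:ℝ)) = 0 := by linarith
  have h2 : (1 : ℝ) + 2 * (n:ℝ) = 0 := by
    rcases mul_eq_zero.mp h1 with h | h
    · exact absurd h (ne_of_gt hπ)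
    · exact h
  have h3 : ((1 + 2 * n : ℤ) : ℝ) = 0 := by push_cast; linarith
  have h4 : (1 + 2 * n : ℤ) = 0 := by exact_mod_cast h3
  omega

/-- Any planar simple `C¹` loop with nonvanishing derivative inscribes a non-degenerate
parallelogram with one vertex at the prescribed point `γ 0`, cutting the loop into four
pieces such that opposite pieces have equal total arc length. -/
theorem c1_loop_parallelogram (γ γ' : ℝ → EuclideanSpace ℝ (Fin 2))
    (hderiv : ∀ t ∈ Set.Icc (0 : ℝ) 1, HasDerivWithinAt γ (γ' t) (Set.Icc 0 1) t)
    (hcont : ContinuousOn γ' (Set.Icc 0 1))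
    (hloop : γ 0 = γ 1) (hinj : Set.InjOn γ (Set.Ico 0 1))
    (hne : ∀ t ∈ Set.Icc (0 : ℝ) 1, γ' t ≠ 0) :
    ∃ a b c : ℝ, 0 ≤ a ∧ a ≤ b ∧ b ≤ c ∧ c ≤ 1 ∧
      γ 0 + γ b = γ a + γ c ∧
      (γ 0 ≠ γ a ∧ γ 0 ≠ γ b ∧ γ 0 ≠ γ c ∧ γ a ≠ γ b ∧ γ a ≠ γ c ∧ γ b ≠ γ c) ∧
      (∫ t in (0 : ℝ)..a, ‖γ' t‖) + (∫ t in b..c, ‖γ' t‖) =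
        (∫ t in a..b, ‖γ' t‖) + (∫ t in c..1, ‖γ' t‖) := by
  have h01 : (0:ℝ) ≤ 1 := zero_le_one
  have hγcont : ContinuousOn γ (Set.Icc 0 1) := fun t ht => (hderiv t ht).continuousWithinAt
  set g : ℝ → ℝ := fun t => ‖γ' t‖ with hg
  have hgcont : ContinuousOn g (Set.Icc 0 1) := hcont.norm
  have hgint : ∀ x ∈ Set.Icc (0:ℝ) 1, ∀ y ∈ Set.Icc (0:ℝ) 1,
      IntervalIntegrable g MeasureTheory.volume x y := fun x hx y hy =>
    (hgcont.mono (Set.uIcc_subset_Icc hx hy)).intervalIntegrable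
  set s : ℝ → ℝ := fun t => ∫ u in (0:ℝ)..t, g u with hs
  have hmem01 : ∀ {x : ℝ}, x ∈ Set.Icc (0:ℝ) 1 → x ∈ Set.Icc (0:ℝ) 1 := id
  have hscont : ContinuousOn s (Set.Icc 0 1) := by
    have := intervalIntegral.continuousOn_primitive_interval
      (f := g) (a := 0) (b := 1) (μ := MeasureTheory.volume) ?_
    · rwa [Set.uIcc_of_le h01] at this
    · rw [Set.uIcc_of_le h01]
      exact hgcont.integrableOn_Icc
  have hsdiff : ∀ x ∈ Set.Icc (0:ℝ) 1, ∀ y ∈ Set.Icc (0:ℝ) 1,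
      (∫ u in x..y, g u) = s y - s x := by
    intro x hx y hy
    exact (intervalIntegral.integral_interval_sub_left
      (hgint 0 (Set.left_mem_Icc.2 h01) y hy) (hgint 0 (Set.left_mem_Icc.2 h01) x hx)).symm
  have hsmono : ∀ x ∈ Set.Icc (0:ℝ) 1, ∀ y ∈ Set.Icc (0:ℝ) 1, x < y → s x < s y := by
    intro x hx y hy hxy
    have hpos : 0 < ∫ u in x..y, g u := by
      apply intervalIntegral.intervalIntegral_pos_of_pos_on (hgint x hx y hy)
      · intro t ht
        have htm : t ∈ Set.Icc (0:ℝ) 1 := ⟨le_trans hx.1 ht.1.le, le_trans ht.2.le hy.2⟩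
        exact norm_pos_iff.2 (hne t htm)
      · exact hxy
    rw [hsdiff x hx y hy] at hpos
    linarith
  have hsLmono : ∀ x ∈ Set.Icc (0:ℝ) 1, ∀ y ∈ Set.Icc (0:ℝ) 1, x ≤ y → s x ≤ s y := by
    intro x hx y hy hxy
    rcases hxy.eq_or_lt with h | h
    · rw [h]
    · exact (hsmono x hx y hy h).le
  have hs0 : s 0 = 0 := intervalIntegral.integral_same
  set L : ℝ := s 1 with hLdef
  have hLpos : 0 < L := by
    have := hsmono 0 (Set.left_mem_Icc.2 h01) 1 (Set.right_mem_Icc.2 h01) one_pos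
    rwa [hs0] at this
  have hsmem : ∀ t ∈ Set.Icc (0:ℝ) 1, s t ∈ Set.Icc 0 L := by
    intro t ht
    constructor
    · have := hsLmono 0 (Set.left_mem_Icc.2 h01) t ht ht.1
      rwa [hs0] at this
    · exact hsLmono t ht 1 (Set.right_mem_Icc.2 h01) ht.2
  -- the inverse function
  have hsurj : ∀ y ∈ Set.Icc (0:ℝ) L, ∃ t, t ∈ Set.Icc (0:ℝ) 1 ∧ s t = y := by
    intro y hy
    have hy' : y ∈ Set.Icc (s 0) (s 1) := by rwa [hs0]
    obtain ⟨t, ht, hst⟩ := intermediate_value_Icc h01 hscont hy'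
    exact ⟨t, ht, hst⟩
  choose! τ hτmem hτs using hsurj
  have hτs_of : ∀ t ∈ Set.Icc (0:ℝ) 1, τ (s t) = t := by
    intro t ht
    have h1 := hτs (s t) (hsmem t ht)
    by_contra hne'
    rcases lt_or_gt_of_ne hne' with h | h
    · exact absurd h1 (ne_of_lt (hsmono _ (hτmem _ (hsmem t ht)) _ ht h))
    · exact absurd h1 (ne_of_gt (hsmono _ ht _ (hτmem _ (hsmem t ht)) h))
  have hτ0 : τ 0 = 0 := by
    have := hτs_of 0 (Set.left_mem_Icc.2 h01); rwa [hs0] at this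
  have hτL : τ L = 1 := hτs_of 1 (Set.right_mem_Icc.2 h01)
  have hτmono : StrictMonoOn τ (Set.Icc 0 L) := by
    intro x hx y hy hxy
    by_contra hc
    push_neg at hc
    have := hsLmono _ (hτmem y hy) _ (hτmem x hx) hc
    rw [hτs x hx, hτs y hy] at this
    linarith
  have hτlt1 : ∀ y ∈ Set.Ico (0:ℝ) L, τ y < 1 := by
    rintro y ⟨hy0, hyL⟩
    rw [← hτL]
    exact hτmono ⟨hy0, hyL.le⟩ ⟨hLpos.le, le_refl L⟩ hyL
  -- continuity of τ
  have hτcont : ContinuousOn τ (Set.Icc 0 L) := by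
    intro a ha
    have hsub : Set.Icc (0:ℝ) L ⊆ (Set.Icc 0 L ∩ Set.Ici a) ∪ (Set.Icc 0 L ∩ Set.Iic a) := by
      intro x hx
      rcases le_total a x with h | h
      · exact Or.inl ⟨hx, h⟩
      · exact Or.inr ⟨hx, h⟩
    have hright : ContinuousWithinAt τ (Set.Icc 0 L ∩ Set.Ici a) a := by
      rcases ha.2.eq_or_lt with haL | haL
      · have : Set.Icc (0:ℝ) L ∩ Set.Ici a = {a} := by
          apply Set.eq_singleton_iff_unique_mem.2
          refine ⟨⟨ha, le_refl a⟩, ?_⟩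
          rintro x ⟨hx, hx2⟩
          exact le_antisymm (haL ▸ hx.2) hx2
        rw [this]
        exact continuousWithinAt_singleton
      · apply ContinuousWithinAt.mono _ (Set.inter_subset_right)
        apply hτmono.continuousWithinAt_right_of_exists_between
          (Icc_mem_nhdsGE_of_mem ⟨ha.1, haL⟩)
        intro b hb
        have hτa1 : τ a < 1 := hτlt1 a ⟨ha.1, haL⟩
        set e : ℝ := min b ((τ a + 1)/2) with he
        have he1 : τ a < e := lt_min hb (by linarith)
        have he2 : e ≤ b := min_le_left _ _
        have he3 : e ∈ Set.Icc (0:ℝ) 1 := by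
          constructor
          · have := (hτmem a ha).1; exact le_trans this he1.le
          · exact le_trans (min_le_right _ _) (by linarith)
        refine ⟨s e, hsmem e he3, ?_, ?_⟩
        · rw [hτs_of e he3]; exact he1
        · rw [hτs_of e he3]; exact he2
    have hleft : ContinuousWithinAt τ (Set.Icc 0 L ∩ Set.Iic a) a := by
      rcases ha.1.eq_or_lt with ha0 | ha0
      · have : Set.Icc (0:ℝ) L ∩ Set.Iic a = {a} := by
          apply Set.eq_singleton_iff_unique_mem.2
          refine ⟨⟨ha, le_refl a⟩, ?_⟩
          rintro x ⟨hx, hx2⟩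
          exact le_antisymm hx2 (ha0 ▸ hx.1)
        rw [this]
        exact continuousWithinAt_singleton
      · apply ContinuousWithinAt.mono _ (Set.inter_subset_right)
        apply hτmono.continuousWithinAt_left_of_exists_between
          (Icc_mem_nhdsLE_of_mem ⟨ha0, ha.2⟩)
        intro b hb
        have hτa0 : 0 < τ a := by
          rw [← hτ0]
          exact hτmono ⟨le_refl 0, hLpos.le⟩ ha ha0
        set e : ℝ := max b (τ a / 2) with he
        have he1 : e < τ a := max_lt hb (by linarith)
        have he2 : b ≤ e := le_max_left _ _
        have he3 : e ∈ Set.Icc (0:ℝ) 1 := by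
          constructor
          · exact le_trans (by linarith) (le_max_right _ _)
          · exact le_trans he1.le (hτmem a ha).2
        refine ⟨s e, hsmem e he3, ?_, ?_⟩
        · rw [hτs_of e he3]; exact he2
        · rw [hτs_of e he3]; exact he1
    exact (hright.union hleft).mono hsub
  -- pass to the complex plane
  set φ : EuclideanSpace ℝ (Fin 2) → ℂ := fun p => (p 0 : ℂ) + (p 1 : ℂ) * Complex.I with hφ
  have hφcont : Continuous φ := by
    apply Continuous.add
    · exact Complex.continuous_ofReal.comp (EuclideanSpace.proj (0 : Fin 2)).continuous
    · exact (Complex.continuous_ofReal.comp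
        (EuclideanSpace.proj (1 : Fin 2)).continuous).mul continuous_const
  have hφinj : Function.Injective φ := by
    intro p q hpq
    simp only [hφ, Complex.ext_iff, Complex.add_re, Complex.add_im, Complex.ofReal_re,
      Complex.ofReal_im, Complex.mul_re, Complex.mul_im, Complex.I_re, Complex.I_im] at hpq
    ext i
    fin_cases i <;> [skip; skip] <;> simp at hpq ⊢ <;> linarith [hpq.1, hpq.2]
  have hφadd : ∀ p q, φ (p + q) = φ p + φ q := by
    intro p q
    simp only [hφ]
    have e0 : (p + q) 0 = p 0 + q 0 := rfl
    have e1 : (p + q) 1 = p 1 + q 1 := rfl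
    rw [e0, e1]
    push_cast
    ring
  set Γ : ℝ → ℂ := fun y => φ (γ (τ y)) with hΓdef
  have hΓcont : ContinuousOn Γ (Set.Icc 0 L) := by
    apply hφcont.comp_continuousOn
    exact hγcont.comp hτcont hτmem
  have hΓloop : Γ L = Γ 0 := by
    simp only [hΓdef, hτL, hτ0, hloop]
  have hΓinj : Set.InjOn Γ (Set.Ico 0 L) := by
    rintro x ⟨hx0, hxL⟩ y ⟨hy0, hyL⟩ hxy
    simp only [hΓdef] at hxy
    have h1 := hinj ⟨(hτmem x ⟨hx0, hxL.le⟩).1, hτlt1 x ⟨hx0, hxL⟩⟩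
      ⟨(hτmem y ⟨hy0, hyL.le⟩).1, hτlt1 y ⟨hy0, hyL⟩⟩ (hφinj hxy)
    have h2 := congrArg s h1
    rwa [hτs x ⟨hx0, hxL.le⟩, hτs y ⟨hy0, hyL.le⟩] at h2
  -- apply the core lemma
  obtain ⟨u, v, hu, hv, heq⟩ := square_zero Γ L hLpos hΓcont hΓloop hΓinj
  have hL2L : L/2 ≤ L := by linarith
  have humem : u ∈ Set.Icc (0:ℝ) L := ⟨hu.1.le, le_trans hu.2.le hL2L⟩
  have hbmem : u + L/2 - v ∈ Set.Icc (0:ℝ) L :=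
    ⟨by linarith [hu.1, hv.2], by linarith [hu.2, hv.1]⟩
  have hcmem : L - v ∈ Set.Icc (0:ℝ) L := ⟨by linarith [hv.2], by linarith [hv.1]⟩
  set a : ℝ := τ u with hadef
  set b : ℝ := τ (u + L/2 - v) with hbdef
  set c : ℝ := τ (L - v) with hcdef
  have hab : a < b := hτmono humem hbmem (by linarith [hv.2])
  have hbc : b < c := hτmono hbmem hcmem (by linarith [hu.2])
  have h0a : 0 < a := by
    rw [← hτ0]
    exact hτmono ⟨le_refl 0, hLpos.le⟩ humem hu.1
  have hc1 : c < 1 := hτlt1 (L - v) ⟨by linarith [hv.2], by linarith [hv.1]⟩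
  have haI : a ∈ Set.Icc (0:ℝ) 1 := hτmem u humem
  have hbI : b ∈ Set.Icc (0:ℝ) 1 := hτmem _ hbmem
  have hcI : c ∈ Set.Icc (0:ℝ) 1 := hτmem _ hcmem
  refine ⟨a, b, c, h0a.le, hab.le, hbc.le, hc1.le, ?_, ?_, ?_⟩
  · -- parallelogram
    apply hφinj
    rw [hφadd, hφadd]
    simp only [hΓdef] at heq
    rw [hτ0] at heq
    show φ (γ 0) + φ (γ (τ (u + L/2 - v))) = φ (γ (τ u)) + φ (γ (τ (L - v)))
    linear_combination -heq
  · -- distinctness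
    have hmem0 : (0:ℝ) ∈ Set.Ico (0:ℝ) 1 := ⟨le_refl 0, one_pos⟩
    have hmema : a ∈ Set.Ico (0:ℝ) 1 := ⟨haI.1, lt_trans (lt_trans hab hbc) hc1⟩
    have hmemb : b ∈ Set.Ico (0:ℝ) 1 := ⟨hbI.1, lt_trans hbc hc1⟩
    have hmemc : c ∈ Set.Ico (0:ℝ) 1 := ⟨hcI.1, hc1⟩
    refine ⟨?_, ?_, ?_, ?_, ?_, ?_⟩
    · exact fun h => absurd (hinj hmem0 hmema h) (by linarith)
    · exact fun h => absurd (hinj hmem0 hmemb h) (by linarith)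
    · exact fun h => absurd (hinj hmem0 hmemc h) (by linarith)
    · exact fun h => absurd (hinj hmema hmemb h) (by linarith)
    · exact fun h => absurd (hinj hmema hmemc h) (by linarith)
    · exact fun h => absurd (hinj hmemb hmemc h) (by linarith)
  · -- arc lengths
    have h0I : (0:ℝ) ∈ Set.Icc (0:ℝ) 1 := Set.left_mem_Icc.2 h01
    have h1I : (1:ℝ) ∈ Set.Icc (0:ℝ) 1 := Set.right_mem_Icc.2 h01
    have i1 := hsdiff 0 h0I a haI
    have i2 := hsdiff b hbI c hcI
    have i3 := hsdiff a haI b hbI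
    have i4 := hsdiff c hcI 1 h1I
    have va : s a = u := hτs u humem
    have vb : s b = u + L/2 - v := hτs _ hbmem
    have vc : s c = L - v := hτs _ hcmem
    rw [i1, i2, i3, i4, va, vb, vc, hs0, ← hLdef]
    ring
end

section
/- Let A, B, C, D ∈ ℝ² be points satisfying A + C = B + D (so that A, B, C, D in cyclic order are the vertices of a parallelogram). If there exists a point P ∈ ℝ² such that ‖P−A‖² + ‖P−C‖² = ‖P−B‖² + ‖P−D‖², then the diagonals have equal length, ‖A−C‖ = ‖B−D‖, and equivalently the adjacent sides are orthogonal: ⟨B−A, C−B⟩ = 0; that is, ABCD is a rectangle. -/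
/-- **Converse of the British Flag Theorem.** If `A, B, C, D` (in cyclic order) are the
vertices of a parallelogram (`A + C = B + D`) and some point `P` satisfies
`‖P-A‖² + ‖P-C‖² = ‖P-B‖² + ‖P-D‖²`, then `ABCD` is a rectangle: the diagonals have
equal length and adjacent sides are orthogonal. -/
theorem converse_british_flag (A B C D P : EuclideanSpace ℝ (Fin 2))
    (hpar : A + C = B + D)
    (hP : ‖P - A‖ ^ 2 + ‖P - C‖ ^ 2 = ‖P - B‖ ^ 2 + ‖P - D‖ ^ 2) :
    ‖A - C‖ = ‖B - D‖ ∧ (inner ℝ (B - A) (C - B) : ℝ) = 0 := by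
  have hD : D = A + C - B := by rw [hpar]; abel
  subst hD
  simp only [← real_inner_self_eq_norm_sq, inner_sub_left, inner_sub_right,
    inner_add_left, inner_add_right] at hP
  have hAC : (inner ℝ A C : ℝ) = inner ℝ C A := (real_inner_comm A C).symm
  have hAB : (inner ℝ A B : ℝ) = inner ℝ B A := (real_inner_comm A B).symm
  have hCB : (inner ℝ C B : ℝ) = inner ℝ B C := (real_inner_comm C B).symm
  have hPA : (inner ℝ P A : ℝ) = inner ℝ A P := (real_inner_comm P A).symm
  have hPB : (inner ℝ P B : ℝ) = inner ℝ B P := (real_inner_comm P B).symm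
  have hPC : (inner ℝ P C : ℝ) = inner ℝ C P := (real_inner_comm P C).symm
  constructor
  · have h2 : ‖A - C‖ ^ 2 = ‖B - (A + C - B)‖ ^ 2 := by
      simp only [← real_inner_self_eq_norm_sq, inner_sub_left, inner_sub_right,
        inner_add_left, inner_add_right]
      linarith
    rw [← Real.sqrt_sq (norm_nonneg (A - C)), ← Real.sqrt_sq (norm_nonneg (B - (A + C - B))), h2]
  · simp only [inner_sub_left, inner_sub_right, inner_add_left, inner_add_right]
    linarith
end
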